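/- In an additive transition system, for each configuration c, the set of extensions X(c) = { x ∈ N^Σ : there exists d ≥ c with c + x →* d and τ_k(c) = τ_k(d) } is a submonoid of N^Σ (it contains 0 and is closed under addition). -/

import Mathlib

/-- Reachability: reflexive-transitive closure of the step relation. -/
def Reaches {E : Type*} (step : (E → ℕ) → (E → ℕ) → Prop) : (E → ℕ) → (E → ℕ) → Prop :=
  Relation.ReflTransGen step

/-- k-truncation of a vector in ℕ^E. -/
def trunc {E : Type*} (k : ℕ) (c : E → ℕ) : E → ℕ := fun e => min k (c e)

/-- The set of extensions of a configuration c: inputs x (vectors supported on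
the input alphabet Sig) such that c + x can reach some d ≥ c with the same
k-truncation as c. -/
def Extensions {E : Type*} (step : (E → ℕ) → (E → ℕ) → Prop) (Sig : Set E)
    (k : ℕ) (c : E → ℕ) : Set (E → ℕ) :=
  {x | (∀ e, x e ≠ 0 → e ∈ Sig) ∧
    ∃ d, c ≤ d ∧ Reaches step (c + x) d ∧ trunc k c = trunc k d}

/-- In an additive transition system, the set of extensions X(c) is a submonoid
of ℕ^Σ: it contains 0 and is closed under addition. -/
theorem extensions_monoid {E : Type*} [Fintype E] (Sig : Set E)
    (step : (E → ℕ) → (E → ℕ) → Prop)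
    (hadd : ∀ c c' d : E → ℕ, step c c' → step (c + d) (c' + d))
    (k : ℕ) (hk : 1 ≤ k) (c : E → ℕ) :
    0 ∈ Extensions step Sig k c ∧
      ∀ x y, x ∈ Extensions step Sig k c → y ∈ Extensions step Sig k c →
        x + y ∈ Extensions step Sig k c := by
  have reaches_add : ∀ a b d : E → ℕ, Reaches step a b → Reaches step (a + d) (b + d) := by
    intro a b d h
    induction h with
    | refl => exact Relation.ReflTransGen.refl
    | tail _ hstep ih => exact ih.tail (hadd _ _ d hstep)
  constructor
  · exact ⟨fun e h => absurd rfl h, c, le_refl c, by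
      rw [add_zero]; exact Relation.ReflTransGen.refl, rfl⟩
  · rintro x y ⟨hx, d, hcd, hrx, htx⟩ ⟨hy, d', hcd', hry, hty⟩
    have hdc : d = c + (d - c) := by
      funext e
      exact (Nat.add_sub_cancel' (hcd e)).symm
    refine ⟨fun e h => ?_, d' + (d - c), ?_, ?_, ?_⟩
    · rcases Nat.add_eq_zero.not.mp h with h'
      by_cases hxe : x e = 0
      · exact hy e (fun hye => h' ⟨hxe, hye⟩)
      · exact hx e hxe
    · intro e
      calc c e ≤ d' e := hcd' e
        _ ≤ d' e + (d - c) e := Nat.le_add_right _ _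
    · have h1 : Reaches step (c + x + y) (d + y) := reaches_add _ _ y hrx
      have h2 : Reaches step (c + y + (d - c)) (d' + (d - c)) := reaches_add _ _ _ hry
      have : c + (x + y) = c + x + y := by ring
      rw [this]
      refine h1.trans ?_
      have : d + y = c + y + (d - c) := by
        funext e
        have hce : c e ≤ d e := hcd e
        simp only [Pi.add_apply, Pi.sub_apply]
        omega
      rw [this]
      exact h2
    · funext e
      have h1 : min k (c e) = min k (d e) := congrFun htx e
      have h2 : min k (c e) = min k (d' e) := congrFun hty e
      show min k (c e) = min k (d' e + (d e - c e))
      rcases Nat.eq_zero_or_pos (d e - c e) with h0 | hpos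
      · rw [h0, Nat.add_zero]; exact h2
      · have hck : k ≤ c e := by
          by_contra hlt
          push_neg at hlt
          have hd : c e < d e := Nat.lt_of_sub_pos hpos
          rw [min_eq_right hlt.le] at h1
          omega
        have : k ≤ d' e := hck.trans (hcd' e)
        rw [min_eq_left hck, min_eq_left (this.trans (Nat.le_add_right _ _))]
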